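/- Let ω ∈ ℝ∖ℚ with convergent denominators (q_k). The following are equivalent: (1) lim_{n→∞} (1/log n) ∑_{l=0}^{k(n)} (log q_{l+1})/q_l = 0, where k(n) is defined by q_{k(n)} ≤ n < q_{k(n)+1}; (2) ∑_{l=0}^{k} (log q_{l+1})/q_l = o(log q_k) as k → ∞; (3) log q_{k+1} = o(q_k log q_k) as k → ∞. -/

import Mathlib

/-- The iterated fractional parts of the Gauss continued fraction algorithm:
`gaussIter ω n = ω_n`. -/
noncomputable def gaussIter (ω : ℝ) : ℕ → ℝ
  | 0 => Int.fract ω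
  | n + 1 => Int.fract (gaussIter ω n)⁻¹

/-- The partial quotients of the Gauss continued fraction algorithm:
`cfA ω 0 = a₀ = ⌊ω⌋`, `cfA ω (n+1) = a_{n+1} = ⌊1/ω_n⌋`. -/
noncomputable def cfA (ω : ℝ) : ℕ → ℤ
  | 0 => ⌊ω⌋
  | n + 1 => ⌊(gaussIter ω n)⁻¹⌋

/-- Denominators of the convergents: `q₋₂ = 1`, `q₋₁ = 0`, `q_n = a_n q_{n-1} + q_{n-2}`
(so `q₀ = 1`, `q₁ = a₁`). They are positive integers. -/
noncomputable def qden (ω : ℝ) : ℕ → ℕ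
  | 0 => 1
  | 1 => (cfA ω 1).toNat
  | n + 2 => (cfA ω (n + 2)).toNat * qden ω (n + 1) + qden ω n

/-- Numerators of the convergents: `p₋₂ = 0`, `p₋₁ = 1`, `p_n = a_n p_{n-1} + p_{n-2}`
(so `p₀ = a₀`, `p₁ = a₁ a₀ + 1`). -/
noncomputable def pnum (ω : ℝ) : ℕ → ℤ
  | 0 => cfA ω 0
  | 1 => cfA ω 1 * cfA ω 0 + 1
  | n + 2 => cfA ω (n + 2) * pnum ω (n + 1) + pnum ω n

/-- The denominators viewed as real numbers. -/
noncomputable def qr (ω : ℝ) (n : ℕ) : ℝ := (qden ω n : ℝ)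

variable {ω : ℝ}

lemma irr_gauss (hω : Irrational ω) : ∀ n, Irrational (gaussIter ω n)
  | 0 => by unfold gaussIter Int.fract; exact hω.sub_intCast _
  | n + 1 => by
      unfold gaussIter Int.fract
      exact ((irr_gauss hω n).inv).sub_intCast _

lemma gauss_pos (hω : Irrational ω) (n : ℕ) : 0 < gaussIter ω n :=
  lt_of_le_of_ne (by cases n <;> exact Int.fract_nonneg _)
    (Ne.symm (irr_gauss hω n).ne_zero)

lemma gauss_lt_one (n : ℕ) : gaussIter ω n < 1 := by
  cases n <;> exact Int.fract_lt_one _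

lemma one_le_cfA (hω : Irrational ω) (n : ℕ) : 1 ≤ cfA ω (n + 1) := by
  rw [cfA, Int.le_floor]
  push_cast
  rw [le_inv_comm₀ one_pos (gauss_pos hω n)]
  simpa using (gauss_lt_one n).le

lemma one_le_toNat_cfA (hω : Irrational ω) (n : ℕ) : 1 ≤ (cfA ω (n + 1)).toNat := by
  have := one_le_cfA hω n; omega

lemma one_le_qden (hω : Irrational ω) : ∀ n, 1 ≤ qden ω n
  | 0 => le_refl 1
  | 1 => one_le_toNat_cfA hω 0
  | n + 2 => by
      rw [qden]
      have h1 := one_le_qden hω (n + 1)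
      have h2 := one_le_toNat_cfA hω (n + 1)
      nlinarith

lemma qden_add_le (hω : Irrational ω) (n : ℕ) :
    qden ω n + qden ω (n + 1) ≤ qden ω (n + 2) := by
  rw [qden]
  have h2 := one_le_toNat_cfA hω (n + 1)
  nlinarith [one_le_qden hω (n+1)]

lemma qden_mono (hω : Irrational ω) : Monotone (qden ω) := by
  apply monotone_nat_of_le_succ
  intro n
  cases n with
  | zero => exact one_le_qden hω 1
  | succ m =>
      have e : qden ω (m + 1 + 1) = qden ω (m + 2) := congrArg _ (by omega)
      have := qden_add_le hω m; have := one_le_qden hω m; omega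

lemma qden_succ_lt (hω : Irrational ω) (n : ℕ) : qden ω (n + 1) < qden ω (n + 2) := by
  have := qden_add_le hω n; have := one_le_qden hω n; omega

lemma qden_strict (hω : Irrational ω) {j m : ℕ} (hj : 1 ≤ j) (hm : j < m) :
    qden ω j < qden ω m := by
  have h1 : qden ω j < qden ω (j + 1) := by
    obtain ⟨i, rfl⟩ := Nat.exists_eq_add_of_le hj
    have := qden_succ_lt hω i
    have e1 : qden ω (1 + i) = qden ω (i + 1) := congrArg _ (by omega)
    have e2 : qden ω (1 + i + 1) = qden ω (i + 2) := congrArg _ (by omega)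
    omega
  exact h1.trans_le (qden_mono hω hm)

lemma le_qden (hω : Irrational ω) : ∀ n, n ≤ qden ω n
  | 0 => by rw [qden]; omega
  | 1 => one_le_qden hω 1
  | n + 2 => by
      have h1 := le_qden hω (n + 1)
      have h2 := qden_add_le hω n
      have h3 := one_le_qden hω n
      omega

lemma pow_le_qden (hω : Irrational ω) :
    ∀ n, 2 ^ n ≤ qden ω (2 * n) ∧ 2 ^ n ≤ qden ω (2 * n + 1)
  | 0 => ⟨le_refl 1, one_le_qden hω 1⟩
  | n + 1 => by
      obtain ⟨h1, h2⟩ := pow_le_qden hω n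
      have e1 : qden ω (2 * n + 2) = qden ω (2 * (n + 1)) := congrArg _ (by omega)
      have e2 : qden ω (2 * n + 1 + 1) = qden ω (2 * n + 2) := congrArg _ (by omega)
      have e3 : qden ω (2 * n + 1 + 2) = qden ω (2 * (n + 1) + 1) := congrArg _ (by omega)
      have a1 := qden_add_le hω (2 * n)
      have a2 := qden_add_le hω (2 * n + 1)
      have hp : 2 ^ (n + 1) = 2 ^ n + 2 ^ n := by ring
      omega

lemma one_le_qr (hω : Irrational ω) (n : ℕ) : (1 : ℝ) ≤ qr ω n := by
  unfold qr; exact_mod_cast one_le_qden hω n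

lemma qr_pos (hω : Irrational ω) (n : ℕ) : (0 : ℝ) < qr ω n :=
  lt_of_lt_of_le one_pos (one_le_qr hω n)

lemma log_qr_nonneg (hω : Irrational ω) (n : ℕ) : 0 ≤ Real.log (qr ω n) :=
  Real.log_nonneg (one_le_qr hω n)

lemma summable_inv_qr (hω : Irrational ω) : Summable (fun l => (qr ω l)⁻¹) := by
  have hs : Summable (fun k : ℕ => ((2 : ℝ)⁻¹) ^ k) :=
    summable_geometric_of_lt_one (by norm_num) (by norm_num)
  refine Summable.even_add_odd ?_ ?_
  · refine Summable.of_nonneg_of_le (fun k => inv_nonneg.2 (qr_pos hω _).le) (fun k => ?_) hs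
    rw [inv_pow, inv_le_inv₀ (qr_pos hω _) (by positivity)]
    unfold qr; exact_mod_cast (pow_le_qden hω k).1
  · refine Summable.of_nonneg_of_le (fun k => inv_nonneg.2 (qr_pos hω _).le) (fun k => ?_) hs
    rw [inv_pow, inv_le_inv₀ (qr_pos hω _) (by positivity)]
    unfold qr; exact_mod_cast (pow_le_qden hω k).2

open Finset Filter

lemma tendsto_qden (hω : Irrational ω) : Tendsto (qden ω) atTop atTop :=
  tendsto_atTop_mono (le_qden hω) tendsto_id

lemma tendsto_qr (hω : Irrational ω) : Tendsto (qr ω) atTop atTop :=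
  tendsto_natCast_atTop_atTop.comp (tendsto_qden hω)

lemma tendsto_log_qr (hω : Irrational ω) :
    Tendsto (fun j => Real.log (qr ω j)) atTop atTop :=
  Real.tendsto_log_atTop.comp (tendsto_qr hω)

lemma two_le_qr (hω : Irrational ω) {j : ℕ} (hj : 2 ≤ j) : (2 : ℝ) ≤ qr ω j := by
  have h0 := one_le_qden hω 0
  have h1 := one_le_qden hω 1
  have h2 : qden ω 0 + qden ω 1 ≤ qden ω 2 := qden_add_le hω 0
  have : 2 ≤ qden ω j := le_trans (by omega) (qden_mono hω hj)
  unfold qr; exact_mod_cast this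

lemma log_qr_pos (hω : Irrational ω) {j : ℕ} (hj : 2 ≤ j) : 0 < Real.log (qr ω j) :=
  Real.log_pos (lt_of_lt_of_le one_lt_two (two_le_qr hω hj))

lemma tail_small (hω : Irrational ω) {ε : ℝ} (hε : 0 < ε) :
    ∃ N, ∀ j, ∑ l ∈ Finset.Ico N j, (qr ω l)⁻¹ ≤ ε := by
  have ht := tendsto_sum_nat_add (fun l => (qr ω l)⁻¹)
  have := ht.eventually_lt_const hε
  rw [eventually_atTop] at this
  obtain ⟨N, hN⟩ := this
  refine ⟨N, fun j => ?_⟩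
  have hsum : Summable fun n => (qr ω (n + N))⁻¹ :=
    (summable_nat_add_iff N).2 (summable_inv_qr hω)
  calc ∑ l ∈ Finset.Ico N j, (qr ω l)⁻¹
      = ∑ l ∈ Finset.range (j - N), (qr ω (N + l))⁻¹ :=
        Finset.sum_Ico_eq_sum_range _ _ _
    _ = ∑ l ∈ Finset.range (j - N), (qr ω (l + N))⁻¹ := by
        apply Finset.sum_congr rfl; intro l _; rw [Nat.add_comm]
    _ ≤ ∑' l, (qr ω (l + N))⁻¹ :=
        hsum.sum_le_tsum _ (fun l _ => inv_nonneg.2 (qr_pos hω _).le)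
    _ ≤ ε := (hN N le_rfl).le

/-- The partial sums appearing in the statement. -/
noncomputable def Ssum (ω : ℝ) (j : ℕ) : ℝ :=
  ∑ l ∈ Finset.range (j + 1), Real.log (qr ω (l + 1)) / qr ω l

lemma term_nonneg (hω : Irrational ω) (l : ℕ) :
    0 ≤ Real.log (qr ω (l + 1)) / qr ω l :=
  div_nonneg (log_qr_nonneg hω _) (qr_pos hω _).le

lemma Ssum_nonneg (hω : Irrational ω) (j : ℕ) : 0 ≤ Ssum ω j :=
  Finset.sum_nonneg fun l _ => term_nonneg hω l

lemma term_le_Ssum (hω : Irrational ω) (j : ℕ) :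
    Real.log (qr ω (j + 1)) / qr ω j ≤ Ssum ω j :=
  Finset.single_le_sum (fun l _ => term_nonneg hω l) (Finset.self_mem_range_succ j)

lemma imp23 (hω : Irrational ω)
    (h : Tendsto (fun j => Ssum ω j / Real.log (qr ω j)) atTop (nhds 0)) :
    Tendsto (fun j : ℕ => Real.log (qr ω (j + 1)) / (qr ω j * Real.log (qr ω j)))
      atTop (nhds 0) := by
  apply squeeze_zero'
    (Eventually.of_forall fun j =>
      div_nonneg (log_qr_nonneg hω _) (mul_nonneg (qr_pos hω _).le (log_qr_nonneg hω _)))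
    ?_ h
  filter_upwards [eventually_ge_atTop 2] with j hj
  rw [← div_div]
  gcongr
  · exact (log_qr_pos hω hj).le
  · exact term_le_Ssum hω j

lemma imp32 (hω : Irrational ω)
    (h : Tendsto (fun j : ℕ => Real.log (qr ω (j + 1)) / (qr ω j * Real.log (qr ω j)))
      atTop (nhds 0)) :
    Tendsto (fun j => Ssum ω j / Real.log (qr ω j)) atTop (nhds 0) := by
  rw [Metric.tendsto_atTop] at h ⊢
  intro ε hε
  set ε' := ε / 4 with hε'def
  have hε' : 0 < ε' := by positivity
  obtain ⟨N₁, hN₁⟩ := tail_small hω hε'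
  obtain ⟨N₂, hN₂⟩ := h ε' hε'
  -- head sum
  set H := ∑ l ∈ Finset.range N₁, Real.log (qr ω (l + 1)) / qr ω l with hHdef
  obtain ⟨N₃, hN₃⟩ := eventually_atTop.1 ((tendsto_log_qr hω).eventually_ge_atTop (H / ε'))
  refine ⟨max (max (N₁ + 1) (N₂ + 2)) (max N₃ 2), fun j hj => ?_⟩
  have hj1 : N₁ + 1 ≤ j := le_trans (le_trans (le_max_left _ _) (le_max_left _ _)) hj
  have hj2 : N₂ ≤ j := by
    have := le_trans (le_trans (le_max_right _ _) (le_max_left _ _)) hj; omega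
  have hj3 : N₃ ≤ j := le_trans (le_trans (le_max_left _ _) (le_max_right _ _)) hj
  have hj4 : 2 ≤ j := le_trans (le_trans (le_max_right _ _) (le_max_right _ _)) hj
  have hlogpos : 0 < Real.log (qr ω j) := log_qr_pos hω hj4
  have hlog : H / ε' ≤ Real.log (qr ω j) := hN₃ j hj3
  -- middle sum bound
  have hmid : ∑ l ∈ Finset.Ico N₁ j, Real.log (qr ω (l + 1)) / qr ω l
      ≤ ε' * Real.log (qr ω j) := by
    calc ∑ l ∈ Finset.Ico N₁ j, Real.log (qr ω (l + 1)) / qr ω l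
        ≤ ∑ l ∈ Finset.Ico N₁ j, Real.log (qr ω j) * (qr ω l)⁻¹ := by
          apply Finset.sum_le_sum
          intro l hl
          rw [Finset.mem_Ico] at hl
          rw [div_eq_mul_inv]
          apply mul_le_mul_of_nonneg_right _ (inv_nonneg.2 (qr_pos hω _).le)
          apply Real.log_le_log (qr_pos hω _)
          have : qden ω (l + 1) ≤ qden ω j := qden_mono hω (by omega)
          unfold qr; exact_mod_cast this
      _ = Real.log (qr ω j) * ∑ l ∈ Finset.Ico N₁ j, (qr ω l)⁻¹ := by
          rw [Finset.mul_sum]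
      _ ≤ Real.log (qr ω j) * ε' :=
          mul_le_mul_of_nonneg_left (hN₁ j) hlogpos.le
      _ = ε' * Real.log (qr ω j) := mul_comm _ _
  -- last term bound
  have hlast : Real.log (qr ω (j + 1)) / qr ω j ≤ ε' * Real.log (qr ω j) := by
    have h1 := hN₂ j hj2
    rw [Real.dist_eq, sub_zero] at h1
    have h2 : Real.log (qr ω (j + 1)) / (qr ω j * Real.log (qr ω j)) < ε' :=
      lt_of_le_of_lt (le_abs_self _) h1
    rw [← div_div, div_lt_iff₀ hlogpos] at h2
    exact h2.le
  -- head bound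
  have hhead : H ≤ ε' * Real.log (qr ω j) := by
    rw [div_le_iff₀ hε'] at hlog
    calc H ≤ Real.log (qr ω j) * ε' := hlog
      _ = ε' * Real.log (qr ω j) := mul_comm _ _
  have hsplit : Ssum ω j = H + (∑ l ∈ Finset.Ico N₁ j, Real.log (qr ω (l + 1)) / qr ω l)
      + Real.log (qr ω (j + 1)) / qr ω j := by
    rw [Ssum, Finset.sum_range_succ, hHdef,
      Finset.sum_range_add_sum_Ico _ (by omega : N₁ ≤ j)]
  have hS : Ssum ω j ≤ 3 * ε' * Real.log (qr ω j) := by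
    rw [hsplit]; nlinarith
  rw [Real.dist_eq, sub_zero, abs_of_nonneg (div_nonneg (Ssum_nonneg hω j) hlogpos.le),
    div_lt_iff₀ hlogpos]
  calc Ssum ω j ≤ 3 * ε' * Real.log (qr ω j) := hS
    _ < ε * Real.log (qr ω j) := by
        apply mul_lt_mul_of_pos_right _ hlogpos
        rw [hε'def]; linarith

lemma k_tendsto (hω : Irrational ω) {k : ℕ → ℕ}
    (hk : ∀ n : ℕ, 1 ≤ n → qden ω (k n) ≤ n ∧ n < qden ω (k n + 1)) :
    Tendsto k atTop atTop := by
  rw [tendsto_atTop_atTop]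
  intro b
  refine ⟨qden ω b, fun n hn => ?_⟩
  have hn1 : 1 ≤ n := le_trans (one_le_qden hω b) hn
  by_contra hcon
  push_neg at hcon
  have : qden ω (k n + 1) ≤ qden ω b := qden_mono hω (by omega)
  have := (hk n hn1).2
  omega

lemma k_qden (hω : Irrational ω) {k : ℕ → ℕ}
    (hk : ∀ n : ℕ, 1 ≤ n → qden ω (k n) ≤ n ∧ n < qden ω (k n + 1))
    {j : ℕ} (hj : 1 ≤ j) : k (qden ω j) = j := by
  obtain ⟨h1, h2⟩ := hk (qden ω j) (one_le_qden hω j)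
  rcases lt_trichotomy (k (qden ω j)) j with h | h | h
  · exfalso
    have : qden ω (k (qden ω j) + 1) ≤ qden ω j := qden_mono hω (by omega)
    omega
  · exact h
  · exfalso
    have := qden_strict hω hj h
    omega


open Finset Filter

/-- for an irrational number with convergent denominators `(q_k)` and
`k(n)` defined by `q_{k(n)} ≤ n < q_{k(n)+1}`, the three conditions
(1) `(1/log n) ∑_{l=0}^{k(n)} log q_{l+1}/q_l → 0`,
(2) `∑_{l=0}^{k} log q_{l+1}/q_l = o(log q_k)`,
(3) `log q_{k+1} = o(q_k log q_k)` are equivalent. -/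
theorem stmt4 (ω : ℝ) (hω : Irrational ω) (k : ℕ → ℕ)
    (hk : ∀ n : ℕ, 1 ≤ n → qden ω (k n) ≤ n ∧ n < qden ω (k n + 1)) :
    List.TFAE
      [ Tendsto (fun n : ℕ =>
          (∑ l ∈ Finset.range (k n + 1), Real.log (qr ω (l + 1)) / qr ω l) / Real.log n)
          atTop (nhds 0),
        Tendsto (fun j : ℕ =>
          (∑ l ∈ Finset.range (j + 1), Real.log (qr ω (l + 1)) / qr ω l) / Real.log (qr ω j))
          atTop (nhds 0),
        Tendsto (fun j : ℕ =>
          Real.log (qr ω (j + 1)) / (qr ω j * Real.log (qr ω j)))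
          atTop (nhds 0) ] := by
  tfae_have 2 → 3 := fun h => imp23 hω h
  tfae_have 3 → 2 := fun h => imp32 hω h
  tfae_have 1 → 2 := by
    intro h1
    show Tendsto (fun j => Ssum ω j / Real.log (qr ω j)) atTop (nhds 0)
    refine Tendsto.congr' ?_ (h1.comp (tendsto_qden hω))
    filter_upwards [eventually_ge_atTop 1] with j hj
    show Ssum ω (k (qden ω j)) / Real.log (qden ω j) = _
    rw [k_qden hω hk hj]
    rfl
  tfae_have 2 → 1 := by
    intro h2
    have h2' : Tendsto (fun j => Ssum ω j / Real.log (qr ω j)) atTop (nhds 0) := h2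
    show Tendsto (fun n : ℕ => Ssum ω (k n) / Real.log n) atTop (nhds 0)
    apply squeeze_zero' (g := fun n : ℕ => Ssum ω (k n) / Real.log (qr ω (k n)))
    · filter_upwards [eventually_ge_atTop 1] with n hn
      apply div_nonneg (Ssum_nonneg hω _)
      apply Real.log_nonneg
      exact_mod_cast hn
    · filter_upwards [eventually_ge_atTop 1,
        (k_tendsto hω hk).eventually_ge_atTop 2] with n hn hkn
      apply div_le_div_of_nonneg_left (Ssum_nonneg hω _) (log_qr_pos hω hkn)
      apply Real.log_le_log (qr_pos hω _)
      have := (hk n hn).1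
      unfold qr; exact_mod_cast this
    · exact h2'.comp (k_tendsto hω hk)
  tfae_finish
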